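/- Let G be a finite connected graph on at least two vertices. Then the strong metric dimension of G equals the vertex cover number of the graph on vertex set V(G) in which two vertices are adjacent if and only if they are mutually maximally distant in G. -/

import Mathlib

open SimpleGraph

variable {V : Type*}

/-- `u` is maximally distant from `v` in `G`: every neighbor `w` of `u`
satisfies `d(v,w) ≤ d(v,u)`. -/
def MaxDistant (G : SimpleGraph V) (u v : V) : Prop :=
  ∀ w, G.Adj u w → G.dist v w ≤ G.dist v u

/-- `u` and `v` are mutually maximally distant in `G`. -/
def MMD (G : SimpleGraph V) (u v : V) : Prop :=
  MaxDistant G u v ∧ MaxDistant G v u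

/-- The boundary of `G`: vertices maximally distant from some vertex. -/
def boundary (G : SimpleGraph V) : Set V := {u | ∃ v, MaxDistant G u v}

/-- The strong resolving graph on the whole vertex set (`G_{SR+I}`):
two vertices are adjacent iff they are distinct and mutually maximally distant. -/
def srGraphI (G : SimpleGraph V) : SimpleGraph V where
  Adj u v := u ≠ v ∧ MMD G u v
  symm := ⟨by
    rintro u v ⟨hne, h1, h2⟩
    exact ⟨hne.symm, h2, h1⟩⟩
  loopless := ⟨by
    rintro u ⟨hne, _⟩
    exact hne rfl⟩

/-- The strong resolving graph `G_SR`, with vertex set the boundary of `G`. -/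
def srGraph (G : SimpleGraph V) : SimpleGraph (boundary G) :=
  (srGraphI G).induce (boundary G)

/-- `u` and `v` are true twins: distinct vertices with equal closed neighborhoods. -/
def TrueTwins (G : SimpleGraph V) (u v : V) : Prop :=
  u ≠ v ∧ insert u (G.neighborSet u) = insert v (G.neighborSet v)

/-- `u` and `v` are false twins: distinct vertices with equal open neighborhoods. -/
def FalseTwins (G : SimpleGraph V) (u v : V) : Prop :=
  u ≠ v ∧ G.neighborSet u = G.neighborSet v

/-- A vertex is simplicial if its neighborhood induces a complete graph. -/
def IsSimplicial (G : SimpleGraph V) (v : V) : Prop :=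
  ∀ a b, G.Adj v a → G.Adj v b → a ≠ b → G.Adj a b

/-- `w` strongly resolves `u` and `v`. -/
def StronglyResolves (G : SimpleGraph V) (w u v : V) : Prop :=
  G.dist w u = G.dist w v + G.dist v u ∨ G.dist w v = G.dist w u + G.dist u v

/-- `S` is a strong metric generator for `G`. -/
def IsStrongMetricGenerator (G : SimpleGraph V) (S : Set V) : Prop :=
  ∀ u v : V, u ≠ v → ∃ w ∈ S, StronglyResolves G w u v

/-- The strong metric dimension of `G`. -/
noncomputable def sdim (G : SimpleGraph V) : ℕ :=
  sInf {n | ∃ S : Set V, S.ncard = n ∧ IsStrongMetricGenerator G S}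

/-- `S` is a vertex cover of `H`. -/
def IsVertexCover (H : SimpleGraph V) (S : Set V) : Prop :=
  ∀ u v : V, H.Adj u v → u ∈ S ∨ v ∈ S

/-- The vertex cover number of `H`. -/
noncomputable def vertexCoverNumber (H : SimpleGraph V) : ℕ :=
  sInf {n | ∃ S : Set V, S.ncard = n ∧ _root_.IsVertexCover H S}

/-- The graph `G*`: distinct vertices adjacent iff at distance at least two
or true twins. -/
def GStar (G : SimpleGraph V) : SimpleGraph V where
  Adj u v := u ≠ v ∧ (2 ≤ G.dist u v ∨ TrueTwins G u v)
  symm := ⟨by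
    rintro u v ⟨hne, h | h⟩
    · exact ⟨hne.symm, Or.inl (by rwa [G.dist_comm])⟩
    · exact ⟨hne.symm, Or.inr ⟨h.1.symm, h.2.symm⟩⟩⟩
  loopless := ⟨by
    rintro u ⟨hne, _⟩
    exact hne rfl⟩

/-- The direct (tensor) product of two graphs. -/
def DirectProd {α β : Type*} (G : SimpleGraph α) (H : SimpleGraph β) :
    SimpleGraph (α × β) where
  Adj x y := G.Adj x.1 y.1 ∧ H.Adj x.2 y.2
  symm := ⟨fun _ _ h => ⟨h.1.symm, h.2.symm⟩⟩
  loopless := ⟨fun x h => G.irrefl h.1⟩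

/-- The strong product of two graphs. -/
def StrongProd {α β : Type*} (G : SimpleGraph α) (H : SimpleGraph β) :
    SimpleGraph (α × β) where
  Adj x y := x ≠ y ∧ (x.1 = y.1 ∨ G.Adj x.1 y.1) ∧ (x.2 = y.2 ∨ H.Adj x.2 y.2)
  symm := ⟨by
    rintro x y ⟨hne, h1, h2⟩
    exact ⟨hne.symm, h1.imp Eq.symm Adj.symm, h2.imp Eq.symm Adj.symm⟩⟩
  loopless := ⟨by
    rintro x ⟨hne, _⟩
    exact hne rfl⟩

/-- The Cartesian sum (disjunctive product) of two graphs. -/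
def CartSum {α β : Type*} (G : SimpleGraph α) (H : SimpleGraph β) :
    SimpleGraph (α × β) where
  Adj x y := G.Adj x.1 y.1 ∨ H.Adj x.2 y.2
  symm := ⟨fun _ _ h => h.imp Adj.symm Adj.symm⟩
  loopless := ⟨fun x h => h.elim G.irrefl H.irrefl⟩

/-- The lexicographic product of two graphs. -/
def LexProd {α β : Type*} (G : SimpleGraph α) (H : SimpleGraph β) :
    SimpleGraph (α × β) where
  Adj x y := G.Adj x.1 y.1 ∨ (x.1 = y.1 ∧ H.Adj x.2 y.2)
  symm := ⟨fun _ _ h => h.imp Adj.symm (fun h => ⟨h.1.symm, h.2.symm⟩)⟩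
  loopless := ⟨fun x h => h.elim G.irrefl (fun h => H.irrefl h.2)⟩

/-- The disjoint union of `n` copies of the complete graph on `m` vertices. -/
def CopiesComplete (n m : ℕ) : SimpleGraph (Fin n × Fin m) where
  Adj x y := x.1 = y.1 ∧ x.2 ≠ y.2
  symm := ⟨fun _ _ h => ⟨h.1.symm, h.2.symm⟩⟩
  loopless := ⟨fun x h => h.2 rfl⟩

/-- Every pair of vertices lies on a common cycle of length five. -/
def C5Connected (G : SimpleGraph V) : Prop :=
  ∀ u v : V, ∃ (w : V) (c : G.Walk w w), c.IsCycle ∧ c.length = 5 ∧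
    u ∈ c.support ∧ v ∈ c.support

section Aux

variable [Fintype V] {G : SimpleGraph V}

private lemma dist_lt_card' (hG : G.Connected) (u v : V) :
    G.dist u v < Fintype.card V := by
  obtain ⟨p, hp, hl⟩ := hG.exists_path_of_dist u v
  rw [← hl]
  exact hp.length_lt

private lemma ascend_aux (hG : G.Connected) (v : V) :
    ∀ n u, Fintype.card V ≤ G.dist v u + n →
    ∃ u', MaxDistant G u' v ∧ G.dist v u' = G.dist v u + G.dist u u' := by
  intro n
  induction n with
  | zero =>
    intro u h
    exact absurd (dist_lt_card' hG v u) (by omega)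
  | succ n ih =>
    intro u h
    by_cases hmax : MaxDistant G u v
    · exact ⟨u, hmax, by simp [SimpleGraph.dist_self]⟩
    · simp only [MaxDistant, not_forall, not_le] at hmax
      obtain ⟨u₁, hadj, hlt⟩ := hmax
      have hd1 : G.dist u u₁ = 1 := SimpleGraph.dist_eq_one_iff_adj.mpr hadj
      have htri : G.dist v u₁ ≤ G.dist v u + G.dist u u₁ := hG.dist_triangle
      have heq : G.dist v u₁ = G.dist v u + 1 := by omega
      obtain ⟨u', hmax', hd'⟩ := ih u₁ (by omega)
      refine ⟨u', hmax', ?_⟩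
      have t1 : G.dist v u' ≤ G.dist v u + G.dist u u' := hG.dist_triangle
      have t2 : G.dist u u' ≤ G.dist u u₁ + G.dist u₁ u' := hG.dist_triangle
      omega

private lemma ascend (hG : G.Connected) (v u : V) :
    ∃ u', MaxDistant G u' v ∧ G.dist v u' = G.dist v u + G.dist u u' :=
  ascend_aux hG v (Fintype.card V) u (by omega)

private lemma eq_of_maxdist (hG : G.Connected) {u v w : V} (hmd : MaxDistant G v u)
    (h : G.dist w u = G.dist w v + G.dist v u) : w = v := by
  by_contra hwv
  obtain ⟨p, _, hl⟩ := hG.exists_path_of_dist v w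
  cases p with
  | nil => exact hwv rfl
  | @cons _ x _ hadj q =>
    have h1 : G.dist x w ≤ q.length := SimpleGraph.dist_le q
    have h2 : G.dist u x ≤ G.dist u v := hmd x hadj
    have h3 : G.dist u w ≤ G.dist u x + G.dist x w := hG.dist_triangle
    have c1 : G.dist w u = G.dist u w := G.dist_comm
    have c2 : G.dist w v = G.dist v w := G.dist_comm
    have c3 : G.dist v u = G.dist u v := G.dist_comm
    have hvw : G.dist v w ≠ 0 :=
      fun h0 => hwv ((hG.dist_eq_zero_iff).mp h0).symm
    simp only [SimpleGraph.Walk.length_cons] at hl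
    omega

private lemma resolver_mem (hG : G.Connected) {u v w : V} (hm : MMD G u v)
    (hr : StronglyResolves G w u v) : w = u ∨ w = v := by
  cases hr with
  | inl h => exact Or.inr (eq_of_maxdist hG hm.2 h)
  | inr h => exact Or.inl (eq_of_maxdist hG hm.1 h)

private lemma cover_gen (hG : G.Connected) {S : Set V}
    (hS : _root_.IsVertexCover (srGraphI G) S) : IsStrongMetricGenerator G S := by
  intro u v huv
  obtain ⟨u', hu'max, hu'd⟩ := ascend hG v u
  obtain ⟨v', hv'max, hv'd⟩ := ascend hG u' v
  have hcomm1 : G.dist v' u' = G.dist v' v + G.dist v u' := by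
    have c1 : G.dist u' v' = G.dist v' u' := G.dist_comm
    have c2 : G.dist u' v = G.dist v u' := G.dist_comm
    have c3 : G.dist v v' = G.dist v' v := G.dist_comm
    omega
  have hu'v' : MaxDistant G u' v' := by
    intro x hx
    calc G.dist v' x ≤ G.dist v' v + G.dist v x := hG.dist_triangle
      _ ≤ G.dist v' v + G.dist v u' := by
          exact Nat.add_le_add_left (hu'max x hx) _
      _ = G.dist v' u' := hcomm1.symm
  have hne : u' ≠ v' := by
    intro hh
    subst hh
    have h0 : G.dist u' u' = 0 := SimpleGraph.dist_self
    have hvu' : G.dist v u' = 0 := by omega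
    have : v = u' := (hG.dist_eq_zero_iff).mp hvu'
    subst this
    have hvu : G.dist v u = 0 := by
      have c : G.dist u v = G.dist v u := G.dist_comm
      omega
    exact huv ((hG.dist_eq_zero_iff).mp hvu).symm
  have hadj : (srGraphI G).Adj u' v' := ⟨hne, hu'v', hv'max⟩
  cases hS u' v' hadj with
  | inl hmem =>
    refine ⟨u', hmem, Or.inr ?_⟩
    have c1 : G.dist u' v = G.dist v u' := G.dist_comm
    have c2 : G.dist u' u = G.dist u u' := G.dist_comm
    have c3 : G.dist u v = G.dist v u := G.dist_comm
    omega
  | inr hmem =>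
    refine ⟨v', hmem, Or.inl ?_⟩
    have t1 : G.dist v' u' ≤ G.dist v' u + G.dist u u' := hG.dist_triangle
    have t2 : G.dist v' u ≤ G.dist v' v + G.dist v u := hG.dist_triangle
    have c1 : G.dist v u = G.dist u v := G.dist_comm
    have c2 : G.dist v u' = G.dist u u' + G.dist v u := by omega
    omega

end Aux

theorem stmt1 [Fintype V] (G : SimpleGraph V) (hG : G.Connected)
    (hn : 2 ≤ Fintype.card V) :
    sdim G = vertexCoverNumber (srGraphI G) := by
  have hsets : {n | ∃ S : Set V, S.ncard = n ∧ IsStrongMetricGenerator G S}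
      = {n | ∃ S : Set V, S.ncard = n ∧ _root_.IsVertexCover (srGraphI G) S} := by
    ext n
    constructor
    · rintro ⟨S, hcard, hgen⟩
      refine ⟨S, hcard, fun u v h => ?_⟩
      obtain ⟨hne, hm⟩ := h
      obtain ⟨w, hwS, hwr⟩ := hgen u v hne
      rcases resolver_mem hG hm hwr with rfl | rfl
      · exact Or.inl hwS
      · exact Or.inr hwS
    · rintro ⟨S, hcard, hcov⟩
      exact ⟨S, hcard, cover_gen hG hcov⟩
  unfold sdim vertexCoverNumber
  rw [hsets]
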